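/- arXiv:1405.3819 — 2 statements merged into one kernel-verified Lean document; each statement's English description precedes it below -/
import Mathlib

section
/- Let M be a principally Goldie*-lifting module over a ring R and let N be a submodule of M. If for every cyclic direct summand D of M the submodule (N + D)/N is a direct summand of M/N, then M/N is principally Goldie*-lifting. -/
/-- A submodule `K` is small (superfluous) in `M`:
`K + N = M` implies `N = M` for all submodules `N`. -/
def IsSmallSub {R M : Type*} [Ring R] [AddCommGroup M] [Module R M]
    (K : Submodule R M) : Prop :=
  ∀ N : Submodule R M, K ⊔ N = ⊤ → N = ⊤

/-- `K` is small in the submodule `N` (where `K ≤ N`):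
for every submodule `L ≤ N`, `K + L = N` implies `L = N`. -/
def IsSmallIn {R M : Type*} [Ring R] [AddCommGroup M] [Module R M]
    (K N : Submodule R M) : Prop :=
  ∀ L : Submodule R M, L ≤ N → K ⊔ L = N → L = N

/-- The β* relation: `X β* Y` iff `(X+Y)/X ≪ M/X` and `(X+Y)/Y ≪ M/Y`. -/
def BetaStar {R M : Type*} [Ring R] [AddCommGroup M] [Module R M]
    (X Y : Submodule R M) : Prop :=
  IsSmallSub ((X ⊔ Y).map X.mkQ) ∧ IsSmallSub ((X ⊔ Y).map Y.mkQ)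

/-- A submodule is cyclic if it is generated by a single element. -/
def IsCyclicSub {R M : Type*} [Ring R] [AddCommGroup M] [Module R M]
    (X : Submodule R M) : Prop :=
  ∃ m : M, X = Submodule.span R {m}

/-- A submodule is a direct summand if it has a complement. -/
def IsDirectSummand {R M : Type*} [Ring R] [AddCommGroup M] [Module R M]
    (D : Submodule R M) : Prop :=
  ∃ D' : Submodule R M, IsCompl D D'

/-- `M` is principally Goldie*-lifting: every cyclic submodule is β* equivalent
to a direct summand. -/
def PrinGStarLifting (R M : Type*) [Ring R] [AddCommGroup M] [Module R M] : Prop :=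
  ∀ X : Submodule R M, IsCyclicSub X → ∃ D : Submodule R M, IsDirectSummand D ∧ BetaStar X D

/-- The radical of `M`: the intersection of all maximal proper submodules
(equal to `M` if there are none). -/
def RadSub (R M : Type*) [Ring R] [AddCommGroup M] [Module R M] : Submodule R M :=
  sInf {N : Submodule R M | IsCoatom N}

lemma isSmall_map_iff {R M : Type*} [Ring R] [AddCommGroup M] [Module R M]
    (X Y : Submodule R M) :
    IsSmallSub ((X ⊔ Y).map X.mkQ) ↔ ∀ A : Submodule R M, Y ⊔ A = ⊤ → X ⊔ A = ⊤ := by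
  constructor
  · intro hs A hYA
    have h1 : (X ⊔ Y).map X.mkQ ⊔ (X ⊔ A).map X.mkQ = ⊤ := by
      rw [← Submodule.map_sup, Submodule.map_mkQ_eq_top, sup_sup_sup_comm, sup_idem, hYA]
      simp
    have h2 := hs _ h1
    rw [Submodule.map_mkQ_eq_top, ← sup_assoc, sup_idem] at h2
    exact h2
  · intro hp B hB
    have hXA : X ≤ B.comap X.mkQ := fun x hx => by
      have hx0 : X.mkQ x = 0 := (Submodule.Quotient.mk_eq_zero X).mpr hx
      simp [Submodule.mem_comap, hx0]
    have hmap : (B.comap X.mkQ).map X.mkQ = B :=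
      Submodule.map_comap_eq_of_surjective (Submodule.mkQ_surjective X) B
    have key : X ⊔ Y ⊔ B.comap X.mkQ = Y ⊔ B.comap X.mkQ := by
      rw [sup_assoc, sup_left_comm, sup_eq_right.mpr hXA]
    have h3 : (X ⊔ Y ⊔ B.comap X.mkQ).map X.mkQ = ⊤ := by
      rw [Submodule.map_sup, hmap, hB]
    rw [Submodule.map_mkQ_eq_top, ← sup_assoc, ← sup_assoc, sup_idem, key] at h3
    have hXAtop := hp (B.comap X.mkQ) h3
    have hAtop : B.comap X.mkQ = ⊤ := by rwa [sup_eq_right.mpr hXA] at hXAtop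
    rw [← hmap, hAtop, Submodule.map_top, Submodule.range_mkQ]

lemma betaStar_iff {R M : Type*} [Ring R] [AddCommGroup M] [Module R M]
    (X Y : Submodule R M) :
    BetaStar X Y ↔ ∀ A : Submodule R M, (X ⊔ A = ⊤ ↔ Y ⊔ A = ⊤) := by
  rw [BetaStar, isSmall_map_iff X Y,
    show (X ⊔ Y).map Y.mkQ = (Y ⊔ X).map Y.mkQ by rw [sup_comm], isSmall_map_iff Y X]
  exact ⟨fun ⟨h1, h2⟩ A => ⟨h2 A, h1 A⟩, fun h => ⟨fun A => (h A).mpr, fun A => (h A).mp⟩⟩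

/-- If `M` is principally Goldie*-lifting and `N ≤ M` is such that
`(N + D)/N` is a direct summand of `M/N` for every cyclic direct summand `D`
of `M`, then `M/N` is principally Goldie*-lifting. -/
theorem stmt_9 {R M : Type*} [Ring R] [AddCommGroup M] [Module R M]
    (hM : PrinGStarLifting R M) (N : Submodule R M)
    (h : ∀ D : Submodule R M, IsCyclicSub D → IsDirectSummand D →
      IsDirectSummand ((N ⊔ D).map N.mkQ)) :
    PrinGStarLifting R (M ⧸ N) := by
  intro Xbar hXbar
  obtain ⟨x, hx⟩ := hXbar
  obtain ⟨m, hm⟩ := N.mkQ_surjective x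
  obtain ⟨D, ⟨D', hcompl⟩, hbeta⟩ := hM (Submodule.span R {m}) ⟨m, rfl⟩
  rw [betaStar_iff] at hbeta
  -- D is cyclic
  set π : M →ₗ[R] M := D.subtype ∘ₗ (D.projectionOnto D' hcompl) with hπ
  have hXD' : Submodule.span R {m} ⊔ D' = ⊤ := (hbeta D').mpr hcompl.sup_eq_top
  have hrange : (⊤ : Submodule R M).map π = D := by
    rw [Submodule.map_top, hπ, LinearMap.range_comp,
      Submodule.range_projectionOnto, Submodule.map_top, Submodule.range_subtype]
  have hD'bot : D'.map π = ⊥ := by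
    rw [eq_bot_iff]
    rintro y ⟨d', hd', rfl⟩
    simp [hπ, Submodule.projectionOnto_apply_of_mem_right hcompl hd']
  have hDcyc : IsCyclicSub D := by
    refine ⟨π m, ?_⟩
    have : (Submodule.span R {m} ⊔ D').map π = D := by rw [hXD', hrange]
    rw [Submodule.map_sup, hD'bot, sup_bot_eq, Submodule.map_span,
      Set.image_singleton] at this
    exact this.symm
  obtain ⟨E', hE'⟩ := h D hDcyc ⟨D', hcompl⟩
  refine ⟨(N ⊔ D).map N.mkQ, ⟨E', hE'⟩, ?_⟩
  rw [betaStar_iff]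
  intro Abar
  have hNA : N ≤ Abar.comap N.mkQ := fun y hy => by
    have hy0 : N.mkQ y = 0 := (Submodule.Quotient.mk_eq_zero N).mpr hy
    simp [Submodule.mem_comap, hy0]
  have hmapA : (Abar.comap N.mkQ).map N.mkQ = Abar :=
    Submodule.map_comap_eq_of_surjective (Submodule.mkQ_surjective N) Abar
  have hXmap : (Submodule.span R {m}).map N.mkQ = Xbar := by
    rw [Submodule.map_span, Set.image_singleton, hm, ← hx]
  have e1 : (Submodule.span R {m} ⊔ Abar.comap N.mkQ).map N.mkQ = Xbar ⊔ Abar := by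
    rw [Submodule.map_sup, hXmap, hmapA]
  have left : Xbar ⊔ Abar = ⊤ ↔ Submodule.span R {m} ⊔ Abar.comap N.mkQ = ⊤ := by
    rw [← e1, Submodule.map_mkQ_eq_top, sup_left_comm, sup_eq_right.mpr hNA]
  have e2 : (N ⊔ D ⊔ Abar.comap N.mkQ).map N.mkQ = (N ⊔ D).map N.mkQ ⊔ Abar := by
    rw [Submodule.map_sup, hmapA]
  have right : (N ⊔ D).map N.mkQ ⊔ Abar = ⊤ ↔ D ⊔ Abar.comap N.mkQ = ⊤ := by
    rw [← e2, Submodule.map_mkQ_eq_top, ← sup_assoc, ← sup_assoc, sup_idem,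
      sup_assoc, sup_left_comm, sup_eq_right.mpr hNA]
  rw [left, right]
  exact hbeta (Abar.comap N.mkQ)
end

section
/- Let M be a principally Goldie*-lifting module over a ring R with the summand sum property (the sum of any two direct summands of M is again a direct summand of M). Then every direct summand of M is principally Goldie*-lifting. -/
/-- `(X ⊔ Y)/Y` is small in `M/Y` iff every `L ⊇ Y` with `X ⊔ L = ⊤` equals `⊤`. -/
lemma small_mkQ_iff {R M : Type*} [Ring R] [AddCommGroup M] [Module R M]
    (X Y : Submodule R M) :
    IsSmallSub ((X ⊔ Y).map Y.mkQ) ↔ ∀ L, Y ≤ L → X ⊔ L = ⊤ → L = ⊤ := by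
  constructor
  · intro h L hYL hXL
    have hmap : L.map Y.mkQ = ⊤ := by
      apply h
      rw [← Submodule.map_sup]
      have h1 : X ⊔ Y ⊔ L = ⊤ := by
        rw [sup_assoc, sup_eq_right.mpr hYL, hXL]
      rw [h1, Submodule.map_top, Submodule.range_mkQ]
    have := congrArg (Submodule.comap Y.mkQ) hmap
    rw [Submodule.comap_map_mkQ, Submodule.comap_top, sup_eq_right.mpr hYL] at this
    exact this
  · intro h L' hsup
    have hY : Y ≤ L'.comap Y.mkQ := by
      intro y hy
      simp [Submodule.mem_comap, Submodule.mkQ_apply,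
        (Submodule.Quotient.mk_eq_zero Y).mpr hy]
    have hL : X ⊔ L'.comap Y.mkQ = ⊤ := by
      rw [eq_top_iff]
      intro m _
      have hm : Y.mkQ m ∈ (X ⊔ Y).map Y.mkQ ⊔ L' := by rw [hsup]; trivial
      obtain ⟨a, ha, b, hb, hab⟩ := Submodule.mem_sup.mp hm
      obtain ⟨w, hw, rfl⟩ := ha
      have hmw : m - w ∈ L'.comap Y.mkQ := by
        simp only [Submodule.mem_comap, map_sub]
        rw [show Y.mkQ m = Y.mkQ w + b from hab.symm]
        simpa using hb
      have hmeq : m = w + (m - w) := by abel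
      rw [hmeq]
      have hw' : w ∈ X ⊔ L'.comap Y.mkQ := by
        rcases Submodule.mem_sup.mp hw with ⟨x, hx, y, hy, rfl⟩
        exact Submodule.add_mem _ (Submodule.mem_sup_left hx)
          (Submodule.mem_sup_right (hY hy))
      exact Submodule.add_mem _ hw' (Submodule.mem_sup_right hmw)
    have htop := h _ hY hL
    have := congrArg (Submodule.map Y.mkQ) htop
    rw [Submodule.map_comap_eq, Submodule.range_mkQ, top_inf_eq, Submodule.map_top,
      Submodule.range_mkQ] at this
    exact this

/-- If `M` is principally Goldie*-lifting with the summand sum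
property, then every direct summand of `M` is principally Goldie*-lifting. -/
theorem stmt_12 {R M : Type*} [Ring R] [AddCommGroup M] [Module R M]
    (hM : PrinGStarLifting R M)
    (hssp : ∀ D₁ D₂ : Submodule R M, IsDirectSummand D₁ → IsDirectSummand D₂ →
      IsDirectSummand (D₁ ⊔ D₂)) :
    ∀ D : Submodule R M, IsDirectSummand D → PrinGStarLifting R D := by
  rintro D ⟨D', hDD'⟩ Xt ⟨d, rfl⟩
  set Xt : Submodule R D := Submodule.span R {d} with hXt
  set X : Submodule R M := Submodule.span R {(d : M)} with hX
  have hXmap : Xt.map D.subtype = X := by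
    rw [hXt, Submodule.map_span, Set.image_singleton]; rfl
  have hXD : X ≤ D := by rw [← hXmap]; exact Submodule.map_subtype_le _ _
  obtain ⟨E, hEs, hβ⟩ := hM X ⟨(d : M), rfl⟩
  obtain ⟨C, hC⟩ := hssp E D' hEs ⟨D, hDD'.symm⟩
  set N : Submodule R M := (E ⊔ D') ⊓ D with hN
  have hND : N ≤ D := inf_le_right
  have f1 : N ⊔ D' = E ⊔ D' := by
    rw [hN, sup_comm, inf_comm, ← sup_inf_assoc_of_le _ le_sup_right,
      sup_comm D' D, hDD'.sup_eq_top, top_inf_eq]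
  -- the two β* components, reformulated
  have S1 : ∀ L, X ≤ L → E ⊔ L = ⊤ → L = ⊤ := by
    have h1 := hβ.1
    rw [sup_comm] at h1
    exact (small_mkQ_iff E X).mp h1
  have S2 : ∀ L, E ≤ L → X ⊔ L = ⊤ → L = ⊤ := (small_mkQ_iff X E).mp hβ.2
  -- N is a direct summand of D
  set W : Submodule R M := (D' ⊔ C) ⊓ D with hW
  have hWD : W ≤ D := inf_le_right
  have hNW_sup : N ⊔ W = D := by
    rw [hW, ← sup_inf_assoc_of_le _ hND]
    have h2 : N ⊔ (D' ⊔ C) = ⊤ := by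
      rw [← sup_assoc, f1, hC.sup_eq_top]
    rw [h2, top_inf_eq]
  have hNW_inf : N ⊓ W = ⊥ := by
    have key : (D' ⊔ C) ⊓ (E ⊔ D') = D' := by
      rw [sup_inf_assoc_of_le _ le_sup_right]
      have hCE : C ⊓ (E ⊔ D') = ⊥ := by rw [inf_comm, hC.inf_eq_bot]
      rw [hCE, sup_bot_eq]
    have h1 : N ⊓ (D' ⊔ C) ≤ D' :=
      le_trans (le_inf inf_le_right (le_trans inf_le_left inf_le_left)) (le_of_eq key)
    have h2 : N ⊓ W ≤ D ⊓ D' := by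
      refine le_inf (le_trans inf_le_left hND) ?_
      refine le_trans ?_ h1
      exact le_inf inf_le_left (le_trans inf_le_right inf_le_left)
    rw [hDD'.inf_eq_bot] at h2
    exact le_bot_iff.mp h2
  set Nt : Submodule R D := N.comap D.subtype with hNt
  have hNtmap : Nt.map D.subtype = N := by
    rw [hNt, Submodule.map_comap_subtype, inf_eq_right.mpr hND]
  set Wt : Submodule R D := W.comap D.subtype with hWt
  have hcompl : IsCompl Nt Wt := by
    constructor
    · rw [disjoint_iff, hNt, hWt, ← Submodule.comap_inf, hNW_inf, eq_bot_iff]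
      rintro x hx
      simp only [Submodule.mem_comap, Submodule.mem_bot] at hx ⊢
      exact Subtype.ext hx
    · rw [codisjoint_iff, eq_top_iff]
      rintro x -
      have hx : (x : M) ∈ N ⊔ W := by rw [hNW_sup]; exact x.2
      obtain ⟨n, hn, w, hw, hnw⟩ := Submodule.mem_sup.mp hx
      have hnD : n ∈ D := hND hn
      have hwD : w ∈ D := hWD hw
      have hxe : x = (⟨n, hnD⟩ : D) + ⟨w, hwD⟩ := by
        apply Subtype.ext; exact hnw.symm
      rw [hxe]
      exact Submodule.add_mem _ (Submodule.mem_sup_left hn)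
        (Submodule.mem_sup_right hw)
  refine ⟨Nt, ⟨Wt, hcompl⟩, ?_, ?_⟩
  · -- (Xt ⊔ Nt)/Xt small in D/Xt
    rw [sup_comm, small_mkQ_iff]
    intro Lt hXLt hNLt
    set L : Submodule R M := Lt.map D.subtype with hL
    have hLD : L ≤ D := Submodule.map_subtype_le _ _
    have hXL : X ≤ L := by rw [← hXmap, hL]; exact Submodule.map_mono hXLt
    have hNL : N ⊔ L = D := by
      rw [← hNtmap, hL, ← Submodule.map_sup, hNLt, Submodule.map_top,
        Submodule.range_subtype]
    have htop : E ⊔ (L ⊔ D') = ⊤ := by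
      rw [← sup_assoc, sup_comm E L, sup_assoc, ← f1, ← sup_assoc, sup_comm L N, hNL,
        hDD'.sup_eq_top]
    have hLD' : L ⊔ D' = ⊤ := S1 _ (le_trans hXL le_sup_left) htop
    have hLeq : L = D := by
      calc L = D ⊓ D' ⊔ L := by rw [hDD'.inf_eq_bot, bot_sup_eq]
        _ = D ⊓ (D' ⊔ L) := inf_sup_assoc_of_le _ hLD
        _ = D := by rw [sup_comm, hLD', inf_top_eq]
    apply Submodule.map_injective_of_injective (Submodule.injective_subtype D)
    rw [← hL, Submodule.map_top, Submodule.range_subtype]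
    exact hLeq
  · -- (Xt ⊔ Nt)/Nt small in D/Nt
    rw [small_mkQ_iff]
    intro Lt hNLt hXLt
    set L : Submodule R M := Lt.map D.subtype with hL
    have hLD : L ≤ D := Submodule.map_subtype_le _ _
    have hNL : N ≤ L := by
      rw [← hNtmap, hL]; exact Submodule.map_mono hNLt
    have hXL : X ⊔ L = D := by
      rw [← hXmap, hL, ← Submodule.map_sup, hXLt, Submodule.map_top,
        Submodule.range_subtype]
    have hE : E ≤ L ⊔ D' := by
      refine le_trans le_sup_left (le_of_eq_of_le f1.symm ?_)
      exact sup_le_sup_right hNL _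
    have htop : X ⊔ (L ⊔ D') = ⊤ := by
      rw [← sup_assoc, hXL, hDD'.sup_eq_top]
    have hLD' : L ⊔ D' = ⊤ := S2 _ hE htop
    have hLeq : L = D := by
      calc L = D ⊓ D' ⊔ L := by rw [hDD'.inf_eq_bot, bot_sup_eq]
        _ = D ⊓ (D' ⊔ L) := inf_sup_assoc_of_le _ hLD
        _ = D := by rw [sup_comm, hLD', inf_top_eq]
    apply Submodule.map_injective_of_injective (Submodule.injective_subtype D)
    rw [← hL, Submodule.map_top, Submodule.range_subtype]
    exact hLeq
end
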